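/- Let n be a positive integer and m ≥ 2. Suppose there exists a cardinal λ such that every abelian group G with at least λ elements of additive order m satisfies G → (n)_ω^FS (that is, for every colouring c : G → ℕ there exists X ⊆ G with |X| = n such that FS(X) is monochromatic for c). Then there exists an n-adequate pattern modulo m. -/

import Mathlib

universe u

/-- `FS X` is the set of finite sums (with no repetitions) of elements of `X`. -/
def FS {G : Type*} [AddCommMonoid G] (X : Set G) : Set G :=
  {g | ∃ F : Finset G, F.Nonempty ∧ ↑F ⊆ X ∧ g = ∑ x ∈ F, x}

/-- A sequence `(x_k | k < n)` of elements of `(ℤ/mℤ)^l` is an `n`-adequate pattern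
modulo `m` if the map `σ` (sending a vector to its list of nonzero entries, in increasing
order of index) is constant on `{∑_{k ∈ F} x_k | ∅ ≠ F ⊆ {0, …, n-1}}`. -/
def IsAdequatePattern (n m l : ℕ) (x : Fin n → Fin l → ZMod m) : Prop :=
  ∃ w : List (ZMod m), ∀ F : Finset (Fin n), F.Nonempty →
    ((List.ofFn (∑ k ∈ F, x k)).filter fun a => a ≠ 0) = w

/-- Restricting a finitely supported function to a finset containing its support,
in increasing order, and filtering out zeroes, gives the list of values on the
sorted support. -/
lemma restrict_filter_eq {ι : Type u} [LinearOrder ι] {m : ℕ} (g : ι →₀ ZMod m)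
    (S : Finset ι) (hS : g.support ⊆ S) :
    ((List.ofFn fun j : Fin S.card => g (S.orderEmbOfFin rfl j)).filter fun a => a ≠ 0)
      = (g.support.sort (· ≤ ·)).map g := by
  classical
  have h1 : (List.ofFn fun j : Fin S.card => g (S.orderEmbOfFin rfl j))
      = (S.sort (· ≤ ·)).map g := by
    have : (fun j : Fin S.card => g (S.orderEmbOfFin rfl j))
        = g ∘ (fun j : Fin S.card => (S.sort (· ≤ ·))[(j : ℕ)]'(by
            simpa [Finset.length_sort] using j.2)) := by
      funext j
      simp [Finset.orderEmbOfFin_apply]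
    rw [this, ← List.map_ofFn]
    congr 1
    apply List.ext_getElem
    · simp
    · intro i h1 h2
      simp
  rw [h1, List.filter_map]
  have h2 : ((S.sort (· ≤ ·)).filter ((fun a => decide (a ≠ 0)) ∘ g))
      = g.support.sort (· ≤ ·) := by
    refine (fun hp h1 h2 => List.Perm.eq_of_pairwise' (r := (· ≤ ·)) h1 h2 hp) ?_ ?_ ?_
    · rw [List.perm_ext_iff_of_nodup ((Finset.sort_nodup _ _).filter _)
        (Finset.sort_nodup _ _)]
      intro a
      simp only [List.mem_filter, Finset.mem_sort, Function.comp, decide_eq_true_eq,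
        Finsupp.mem_support_iff]
      constructor
      · rintro ⟨-, ha⟩; exact ha
      · intro ha; exact ⟨hS (Finsupp.mem_support_iff.2 ha), ha⟩
    · exact List.Pairwise.filter _ (Finset.pairwise_sort _ _)
    · exact Finset.pairwise_sort _ _
  rw [h2]

theorem stmt_7 (n m : ℕ) (hn : 0 < n) (hm : 2 ≤ m)
    (h : ∃ lam : Cardinal.{u}, ∀ (G : Type u) [AddCommGroup G],
      lam ≤ Cardinal.mk {g : G // addOrderOf g = m} →
      ∀ c : G → ℕ, ∃ X : Set G, X.ncard = n ∧ ∃ k, ∀ s ∈ FS X, c s = k) :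
    ∃ (l : ℕ) (x : Fin n → Fin l → ZMod m), IsAdequatePattern n m l x := by
  classical
  obtain ⟨lam, h⟩ := h
  haveI : NeZero m := ⟨by omega⟩
  haveI : Fact (1 < m) := ⟨by omega⟩
  set ι : Type u := lam.out with hι
  letI : LinearOrder ι := IsWellOrder.linearOrder WellOrderingRel
  set G : Type u := ι →₀ ZMod m with hG
  -- σ : list of nonzero values in increasing index order
  set σ : G → List (ZMod m) := fun g => (g.support.sort (· ≤ ·)).map g with hσ
  -- encode lists of ZMod m into ℕ
  obtain ⟨enc, henc⟩ : ∃ enc : List (ZMod m) → ℕ, Function.Injective enc :=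
    Countable.exists_injective_nat _
  -- many elements of order m
  have hcard : lam ≤ Cardinal.mk {g : G // addOrderOf g = m} := by
    have hinj : Function.Injective (fun i : ι =>
        (⟨Finsupp.single i (1 : ZMod m), by
          have := addOrderOf_injective (Finsupp.singleAddHom (M := ZMod m) i)
            (Finsupp.single_injective i) (1 : ZMod m)
          simpa [ZMod.addOrderOf_one] using this⟩ :
          {g : G // addOrderOf g = m})) := by
      intro a b hab
      have : (Finsupp.single a (1 : ZMod m)) = Finsupp.single b 1 :=
        congrArg Subtype.val hab
      exact Finsupp.single_left_injective (one_ne_zero) this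
    calc lam = Cardinal.mk ι := (Cardinal.mk_out lam).symm
      _ ≤ _ := Cardinal.mk_le_of_injective hinj
  obtain ⟨X, hXn, k, hk⟩ := h G hcard (fun g => enc (σ g))
  -- X is finite with n elements
  have hXfin : X.Finite := Set.finite_of_ncard_ne_zero (by omega)
  set T : Finset G := hXfin.toFinset with hT
  have hTcard : T.card = n := by
    rw [← hXn, hT]; exact (Set.ncard_eq_toFinset_card _ _).symm
  set y : Fin n → G := fun j => ((T.equivFinOfCardEq hTcard).symm j : G) with hy
  have hyinj : Function.Injective y := fun a b hab => by
    have := Subtype.val_injective hab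
    exact (T.equivFinOfCardEq hTcard).symm.injective this
  have hyX : ∀ j, y j ∈ X := fun j => by
    have h1 : ((T.equivFinOfCardEq hTcard).symm j : G) ∈ T :=
      ((T.equivFinOfCardEq hTcard).symm j).2
    exact (Set.Finite.mem_toFinset hXfin).mp h1
  -- sums over nonempty F are in FS X
  have hFS : ∀ F : Finset (Fin n), F.Nonempty → (∑ j ∈ F, y j) ∈ FS X := by
    intro F hF
    refine ⟨F.image y, hF.image y, ?_, ?_⟩
    · intro g hg
      simp only [Finset.coe_image, Set.mem_image, Finset.mem_coe] at hg
      obtain ⟨j, -, rfl⟩ := hg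
      exact hyX j
    · rw [Finset.sum_image (fun a _ b _ hab => hyinj hab)]
  -- σ is constant on these sums
  have hconst : ∀ F : Finset (Fin n), F.Nonempty →
      σ (∑ j ∈ F, y j) = σ (y ⟨0, hn⟩) := by
    intro F hF
    apply henc
    have h1 := hk _ (hFS F hF)
    have h2 := hk _ (hFS {⟨0, hn⟩} (Finset.singleton_nonempty _))
    simp only [Finset.sum_singleton] at h2
    rw [h1, h2]
  -- combined support
  set S : Finset ι := Finset.univ.biUnion (fun j : Fin n => (y j).support) with hS
  refine ⟨S.card, fun j i => y j (S.orderEmbOfFin rfl i), ?_⟩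
  refine ⟨σ (y ⟨0, hn⟩), ?_⟩
  intro F hF
  have hsupp : (∑ j ∈ F, y j).support ⊆ S := by
    refine Finsupp.support_finset_sum.trans ?_
    intro a ha
    rw [Finset.mem_biUnion] at ha
    rw [hS, Finset.mem_biUnion]
    obtain ⟨j, -, hj⟩ := ha
    exact ⟨j, Finset.mem_univ j, hj⟩
  have key : ((List.ofFn fun j : Fin S.card =>
      (∑ j ∈ F, y j) (S.orderEmbOfFin rfl j)).filter fun a => a ≠ 0)
      = σ (∑ j ∈ F, y j) := restrict_filter_eq (∑ j ∈ F, y j) S hsupp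
  have hx : (∑ k ∈ F, fun i : Fin S.card => (y k) ((S.orderEmbOfFin rfl) i))
      = fun i : Fin S.card => (∑ j ∈ F, y j) ((S.orderEmbOfFin rfl) i) := by
    funext i
    rw [Finset.sum_apply]
    exact (Finsupp.finset_sum_apply F y _).symm
  rw [hx, key, hconst F hF]
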